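/- For every graph G with feedback edge number fes(G) = k, the tree-cut width of G is at most 2k + 1. -/

import Mathlib

open scoped Classical

noncomputable section

/-- A multigraph on an ambient type `A`: a set of vertices together with an
edge-multiplicity function on unordered pairs (loops allowed). -/
structure Multigraph (A : Type) where
  verts : Set A
  mult : Sym2 A → ℕ

namespace Multigraph

variable {A : Type} [Fintype A]

/-- The degree of a vertex in a multigraph; a loop contributes `2` to the degree. -/
def deg (M : Multigraph A) (x : A) : ℕ :=
  (∑ y : A, M.mult s(x, y)) + M.mult s(x, x)

/-- Suppressing the vertex `v`: delete `v` (and all edges incident to it) and, if `v`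
had exactly two edge-endpoints at distinct neighbours `a`, `b`, add an edge `{a,b}`;
if `v` had a double edge to a vertex `a`, add a loop at `a`.  (The formula below is
the intended operation when `deg v ≤ 2`.) -/
def suppress (M : Multigraph A) (v : A) : Multigraph A where
  verts := M.verts \ {v}
  mult := Sym2.lift ⟨fun x y =>
    if x = v ∨ y = v then 0
    else M.mult s(x, y) +
      (if x = y then (if M.mult s(v, x) = 2 then 1 else 0)
       else min (M.mult s(v, x)) 1 * min (M.mult s(v, y)) 1),
    by
      intro x y
      rcases eq_or_ne x y with rfl | hxy
      · rfl
      · dsimp only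
        by_cases h : x = v ∨ y = v
        · rw [if_pos h, if_pos (Or.symm h)]
        · rw [if_neg h, if_neg (fun hc => h (Or.symm hc)), if_neg hxy, if_neg (Ne.symm hxy)]
          have h1 : s(x, y) = s(y, x) := Sym2.eq_swap
          rw [h1, Nat.mul_comm]⟩

/-- One step of suppression: suppress some vertex of degree at most `2`. -/
def SuppressStep (M M' : Multigraph A) : Prop :=
  ∃ v ∈ M.verts, M.deg v ≤ 2 ∧ M' = M.suppress v

/-- A multigraph in which no vertex of degree at most `2` is left. -/
def Reduced (M : Multigraph A) : Prop := ∀ v ∈ M.verts, 3 ≤ M.deg v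

/-- The number of vertices remaining after exhaustively suppressing vertices of degree
at most `2`. -/
def reducedSize (M : Multigraph A) : ℕ :=
  sInf {n | ∃ M' : Multigraph A,
    Relation.ReflTransGen SuppressStep M M' ∧ M'.Reduced ∧ n = M'.verts.ncard}

end Multigraph

/-- A (rooted) tree-cut decomposition of a graph on vertex type `V`: a tree `T` on a
node type `N`, a root, and a near-partition of `V` into bags indexed by the nodes. -/
structure TreeCutDecomp (N V : Type) where
  T : SimpleGraph N
  connected : T.Connected
  acyclic : T.IsAcyclic
  root : N
  bag : N → Set V
  bag_disjoint : ∀ s t : N, s ≠ t → Disjoint (bag s) (bag t)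
  bag_cover : ∀ v : V, ∃ t : N, v ∈ bag t

namespace TreeCutDecomp

variable {N V : Type} [Fintype N] [Fintype V] (D : TreeCutDecomp N V)

/-- The nodes in the subtree rooted at `t`: those nodes whose every walk to the root
passes through `t`. -/
def subtree (t : N) : Set N := {u | ∀ p : D.T.Walk u D.root, t ∈ p.support}

/-- The set of graph vertices contained in bags of the subtree rooted at `t`. -/
def Yset (t : N) : Set V := {v | ∃ u ∈ D.subtree t, v ∈ D.bag u}

/-- The adhesion of a node `t`: the number of edges of `G` crossing between the vertices
below `t` and the remaining vertices (this is `cut(e(t))` for `t ≠ root`, and `0` for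
the root). -/
def adh (G : SimpleGraph V) (t : N) : ℕ :=
  Set.ncard {e : Sym2 V | e ∈ G.edgeSet ∧
    ∃ x y : V, e = s(x, y) ∧ x ∈ D.Yset t ∧ y ∉ D.Yset t}

/-- The nodes in the component of `T - t` containing the neighbour `s` of `t`:
those nodes whose every walk to `t` passes through `s`. -/
def branch (t s : N) : Set N := {u | ∀ p : D.T.Walk u t, s ∈ p.support}

/-- Some node whose bag contains `v`. -/
def nodeOf (v : V) : N := @Classical.epsilon N ⟨D.root⟩ (fun u => v ∈ D.bag u)

/-- The projection used to build the torso at `t`: vertices in the bag of `t` are kept,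
and any other vertex is mapped to (the contracted vertex corresponding to) the
component of `T - t` containing its bag's node, represented by the neighbour `s` of `t`
in that component. -/
def proj (t : N) (v : V) : V ⊕ N :=
  if v ∈ D.bag t then Sum.inl v
  else Sum.inr (@Classical.epsilon N ⟨D.root⟩
    (fun s => D.T.Adj t s ∧ D.nodeOf v ∈ D.branch t s))

/-- The torso of the decomposition at node `t`: the multigraph obtained from `G` by
contracting, for each component of `T - t`, the union of bags of that component into a
single vertex (no loops are created; parallel edges are counted with multiplicity). -/
def torso (G : SimpleGraph V) (t : N) : Multigraph (V ⊕ N) where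
  verts := (Sum.inl '' D.bag t) ∪ (Sum.inr '' (D.T.neighborSet t))
  mult := fun e => Set.ncard {f : Sym2 V | f ∈ G.edgeSet ∧
    Sym2.map (D.proj t) f = e ∧ ¬ (Sym2.map (D.proj t) f).IsDiag}

/-- The torso-size of a node `t`: the number of vertices left after exhaustively
suppressing vertices of degree at most `2` in the torso at `t`. -/
def tor (G : SimpleGraph V) (t : N) : ℕ := (D.torso G t).reducedSize

/-- The width of the tree-cut decomposition. -/
def width (G : SimpleGraph V) : ℕ :=
  Finset.univ.sup fun t : N => max (D.adh G t) (D.tor G t)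

end TreeCutDecomp

/-- The tree-cut width of a graph: the minimum width of a (rooted) tree-cut
decomposition. -/
def tcw {V : Type} [Fintype V] (G : SimpleGraph V) : ℕ :=
  sInf {w | ∃ (N : Type) (_ : Fintype N) (D : TreeCutDecomp N V), D.width G = w}

/-- The feedback edge number of a graph: the minimum number of edges whose deletion
leaves a forest. -/
def fes {V : Type} [Fintype V] (G : SimpleGraph V) : ℕ :=
  sInf {k | ∃ F : Set (Sym2 V), F ⊆ G.edgeSet ∧ F.ncard = k ∧ (G.deleteEdges F).IsAcyclic}

set_option linter.unusedSectionVars false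
set_option maxHeartbeats 1000000

namespace Multigraph

variable {A : Type} [Fintype A]

lemma suppress_mult (M : Multigraph A) (v x y : A) :
    (M.suppress v).mult s(x, y) =
      if x = v ∨ y = v then 0
      else M.mult s(x, y) +
        (if x = y then (if M.mult s(v, x) = 2 then 1 else 0)
         else min (M.mult s(v, x)) 1 * min (M.mult s(v, y)) 1) := rfl

/-- Sum of all degrees (twice the number of edges). -/
def dsum (M : Multigraph A) : ℕ := ∑ x : A, M.deg x

/-- The support simple graph of a multigraph. -/
def supp (M : Multigraph A) : SimpleGraph A where
  Adj x y := x ≠ y ∧ M.mult s(x, y) ≠ 0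
  symm := by
    constructor
    intro x y h
    refine ⟨h.1.symm, ?_⟩
    have : s(y, x) = s(x, y) := Sym2.eq_swap
    rw [this]; exact h.2
  loopless := by constructor; intro x h; exact h.1 rfl

/-- Number of connected components of the support graph meeting the vertex set. -/
def cc (M : Multigraph A) : ℕ := ((M.supp.connectedComponentMk) '' M.verts).ncard

/-- The potential function. -/
def phi (M : Multigraph A) : ℤ :=
  (dsum M : ℤ) + 2 * (cc M : ℤ) - 2 * (M.verts.ncard : ℤ)

lemma dsum_suppress (M : Multigraph A) (v : A) :
    dsum (M.suppress v)
      + 2 * (∑ x ∈ Finset.univ.erase v, M.mult s(v, x))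
      + 2 * M.mult s(v, v)
      + (∑ x ∈ Finset.univ.erase v, min (M.mult s(v, x)) 1)
    = dsum M
      + (∑ x ∈ Finset.univ.erase v, min (M.mult s(v, x)) 1)
        * (∑ x ∈ Finset.univ.erase v, min (M.mult s(v, x)) 1)
      + 2 * (∑ x ∈ Finset.univ.erase v, if M.mult s(v, x) = 2 then 1 else 0) := by
  classical
  obtain ⟨f, hf⟩ : ∃ f : A → A → ℕ, ∀ x y, f x y = M.mult s(x, y) := ⟨_, fun _ _ => rfl⟩
  obtain ⟨t, ht⟩ : ∃ t : A → ℕ, ∀ x, t x = min (f v x) 1 := ⟨_, fun _ => rfl⟩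
  obtain ⟨d, hd⟩ : ∃ d : A → ℕ, ∀ x, d x = if f v x = 2 then 1 else 0 := ⟨_, fun _ => rfl⟩
  obtain ⟨g, hg⟩ : ∃ g : A → A → ℕ, ∀ x y, g x y = if x = y then d x else t x * t y :=
    ⟨_, fun _ _ => rfl⟩
  simp only [← hf, ← ht, ← hd]
  set U : Finset A := Finset.univ.erase v with hU
  have hsym : ∀ x y, f x y = f y x := by
    intro x y; rw [hf, hf, Sym2.eq_swap]
  have hmult' : ∀ x y, (M.suppress v).mult s(x, y) =
      if x = v ∨ y = v then 0 else f x y + g x y := by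
    intro x y; rw [suppress_mult]
    simp only [← hf, ← ht, ← hd, ← hg]
  have hsplit : ∀ h : A → ℕ, ∑ x : A, h x = h v + ∑ x ∈ U, h x := by
    intro h
    rw [hU, Finset.add_sum_erase _ h (Finset.mem_univ v)]
  have hrow0 : ∀ y, (M.suppress v).mult s(v, y) = 0 := by
    intro y; rw [hmult', if_pos (Or.inl rfl)]
  have hcol0 : ∀ x, (M.suppress v).mult s(x, v) = 0 := by
    intro x; rw [hmult', if_pos (Or.inr rfl)]
  have hnn : ∀ x ∈ U, ∀ y ∈ U, (M.suppress v).mult s(x, y) = f x y + g x y := by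
    intro x hx y hy
    rw [hmult', if_neg]
    push_neg
    exact ⟨Finset.ne_of_mem_erase hx, Finset.ne_of_mem_erase hy⟩
  have htt : ∀ x, t x * t x = t x := by
    intro x; rw [ht]
    rcases Nat.eq_zero_or_pos (f v x) with h | h
    · simp [h]
    · have : min (f v x) 1 = 1 := by omega
      simp [this]
  -- dsum of the suppressed graph
  have h1 : dsum (M.suppress v) = ∑ x ∈ U, ((∑ y ∈ U, (f x y + g x y)) + (f x x + g x x)) := by
    unfold dsum Multigraph.deg
    rw [hsplit]
    have hz : (∑ y : A, (M.suppress v).mult s(v, y)) + (M.suppress v).mult s(v, v) = 0 := by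
      simp [hrow0]
    rw [hz, zero_add]
    apply Finset.sum_congr rfl
    intro x hx
    congr 1
    · rw [hsplit (fun y => (M.suppress v).mult s(x, y))]
      simp only [hcol0, zero_add]
      exact Finset.sum_congr rfl fun y hy => hnn x hx y hy
    · exact hnn x hx x hx
  -- dsum of the original graph
  have h2 : dsum M = 2 * (∑ x ∈ U, f v x) + 2 * f v v
      + ((∑ x ∈ U, ∑ y ∈ U, f x y) + ∑ x ∈ U, f x x) := by
    unfold dsum Multigraph.deg
    simp only [← hf]
    rw [hsplit (fun x => (∑ y : A, f x y) + f x x), hsplit (f v)]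
    have hin : ∀ x ∈ U, ((∑ y : A, f x y) + f x x)
        = f v x + ((∑ y ∈ U, f x y) + f x x) := by
      intro x hx
      rw [hsplit (f x), hsym x v]
      ring
    rw [Finset.sum_congr rfl hin, Finset.sum_add_distrib, Finset.sum_add_distrib]
    ring
  -- the double g-sum
  have h3 : (∑ x ∈ U, ∑ y ∈ U, g x y) + (∑ x ∈ U, t x)
      = (∑ x ∈ U, d x) + (∑ x ∈ U, t x) * (∑ x ∈ U, t x) := by
    have hx1 : ∀ x ∈ U, (∑ y ∈ U, g x y) + t x = d x + t x * (∑ z ∈ U, t z) := by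
      intro x hx
      have e1 : g x x + ∑ y ∈ U.erase x, g x y = ∑ y ∈ U, g x y :=
        Finset.add_sum_erase _ (g x) hx
      have e2 : ∑ y ∈ U.erase x, g x y = ∑ y ∈ U.erase x, t x * t y := by
        apply Finset.sum_congr rfl
        intro y hy
        rw [hg, if_neg (Ne.symm (Finset.ne_of_mem_erase hy))]
      have e3 : t x * t x + ∑ y ∈ U.erase x, t x * t y = ∑ y ∈ U, t x * t y :=
        Finset.add_sum_erase _ (fun y => t x * t y) hx
      have e4 : ∑ y ∈ U, t x * t y = t x * (∑ z ∈ U, t z) := by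
        rw [Finset.mul_sum]
      have e5 : g x x = d x := by rw [hg, if_pos rfl]
      have e6 := htt x
      omega
    calc (∑ x ∈ U, ∑ y ∈ U, g x y) + (∑ x ∈ U, t x)
        = ∑ x ∈ U, ((∑ y ∈ U, g x y) + t x) := by rw [Finset.sum_add_distrib]
      _ = ∑ x ∈ U, (d x + t x * (∑ z ∈ U, t z)) := Finset.sum_congr rfl hx1
      _ = (∑ x ∈ U, d x) + (∑ x ∈ U, t x) * (∑ x ∈ U, t x) := by
          rw [Finset.sum_add_distrib, ← Finset.sum_mul]
  -- flatten h1
  have hgd : ∑ x ∈ U, g x x = ∑ x ∈ U, d x := by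
    apply Finset.sum_congr rfl
    intro x _
    rw [hg, if_pos rfl]
  have h4 : ∑ x ∈ U, ((∑ y ∈ U, (f x y + g x y)) + (f x x + g x x))
      = ((∑ x ∈ U, ∑ y ∈ U, f x y) + ∑ x ∈ U, f x x)
        + (∑ x ∈ U, ∑ y ∈ U, g x y) + ∑ x ∈ U, d x := by
    simp only [Finset.sum_add_distrib]
    rw [hgd]
    ring
  rw [h1, h2, h4]
  omega

end Multigraph
namespace Multigraph

variable {A : Type} [Fintype A]

lemma deg_eq (M : Multigraph A) (v : A) :
    M.deg v = (∑ x ∈ Finset.univ.erase v, M.mult s(v, x)) + 2 * M.mult s(v, v) := by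
  unfold Multigraph.deg
  rw [Finset.add_sum_erase Finset.univ (fun y => M.mult s(v, y)) (Finset.mem_univ v) |>.symm]
  ring

lemma dsum_suppress_le (M : Multigraph A) (v : A) (h1 : 1 ≤ M.deg v) (h2 : M.deg v ≤ 2) :
    dsum (M.suppress v) + 2 ≤ dsum M := by
  classical
  have key := dsum_suppress M v
  have hdeg := deg_eq M v
  set U : Finset A := Finset.univ.erase v with hU
  set S : ℕ := ∑ x ∈ U, M.mult s(v, x) with hS
  set L : ℕ := M.mult s(v, v) with hL
  set T : ℕ := ∑ x ∈ U, min (M.mult s(v, x)) 1 with hT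
  set Ed : ℕ := (∑ x ∈ U, if M.mult s(v, x) = 2 then 1 else 0) with hEd
  have hTS : T ≤ S := by
    apply Finset.sum_le_sum
    intro x _
    exact min_le_left _ _
  have hEdT : Ed + T ≤ S := by
    rw [hEd, hT, hS, ← Finset.sum_add_distrib]
    apply Finset.sum_le_sum
    intro x _
    rcases Nat.lt_or_ge (M.mult s(v, x)) 1 with h | h
    · simp [Nat.lt_one_iff.mp h]
    · have hm : min (M.mult s(v, x)) 1 = 1 := by omega
      rw [hm]
      split_ifs with h' <;> omega
  have hT1 : 1 ≤ S → 1 ≤ T := by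
    intro hs
    by_contra hT0
    have : T = 0 := by omega
    have hz : ∀ x ∈ U, min (M.mult s(v, x)) 1 = 0 :=
      (Finset.sum_eq_zero_iff).mp this
    have : S = 0 := Finset.sum_eq_zero fun x hx => by
      have := hz x hx
      omega
    omega
  have hT2 : T ≤ 2 := by omega
  interval_cases T <;> omega

lemma dsum_suppress_eq (M : Multigraph A) (v : A) (h0 : M.deg v = 0) :
    dsum (M.suppress v) = dsum M := by
  classical
  have key := dsum_suppress M v
  have hdeg := deg_eq M v
  set U : Finset A := Finset.univ.erase v with hU
  set S : ℕ := ∑ x ∈ U, M.mult s(v, x) with hS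
  have hS0 : S = 0 := by omega
  have hz : ∀ x ∈ U, M.mult s(v, x) = 0 := (Finset.sum_eq_zero_iff).mp hS0
  have hT : (∑ x ∈ U, min (M.mult s(v, x)) 1) = 0 :=
    Finset.sum_eq_zero fun x hx => by rw [hz x hx]; simp
  have hEd : (∑ x ∈ U, if M.mult s(v, x) = 2 then 1 else 0) = 0 :=
    Finset.sum_eq_zero fun x hx => by rw [hz x hx]; simp
  rw [hT, hEd] at key
  omega

lemma mult_v_zero_of_deg_zero (M : Multigraph A) (v : A) (h0 : M.deg v = 0) :
    ∀ y, M.mult s(v, y) = 0 := by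
  intro y
  unfold Multigraph.deg at h0
  have hs : (∑ y : A, M.mult s(v, y)) = 0 := by omega
  exact (Finset.sum_eq_zero_iff).mp hs y (Finset.mem_univ y)

end Multigraph
namespace Multigraph

variable {A : Type} [Fintype A]

/-- Walk surgery: reachability transfers when deleting `v` if neighbours get connected. -/
lemma reach_transfer {H H' : SimpleGraph A} {v : A}
    (h1 : ∀ x y, H.Adj x y → x ≠ v → y ≠ v → H'.Adj x y)
    (h2 : ∀ x y, H.Adj v x → H.Adj v y → x ≠ y → H'.Adj x y) :
    ∀ (n : ℕ) (u w : A), u ≠ v → w ≠ v → ∀ p : H.Walk u w, p.length ≤ n →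
      H'.Reachable u w := by
  intro n
  induction n with
  | zero =>
    intro u w hu hw p hp
    cases p with
    | nil => exact SimpleGraph.Reachable.refl _
    | cons h q => simp [SimpleGraph.Walk.length_cons] at hp
  | succ n ih =>
    intro u w hu hw p hp
    cases p with
    | nil => exact SimpleGraph.Reachable.refl _
    | @cons _ z _ h q =>
      by_cases hz : z = v
      · subst hz
        cases q with
        | nil => exact absurd rfl hw
        | @cons _ z2 _ h2' q2 =>
          have hz2 : z2 ≠ z := h2'.ne'
          have hlen : q2.length ≤ n := by
            simp [SimpleGraph.Walk.length_cons] at hp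
            omega
          by_cases huz : u = z2
          · subst huz
            exact ih u w hu hw q2 hlen
          · exact ((h2 u z2 h.symm h2' huz).reachable).trans (ih z2 w hz2 hw q2 hlen)
      · have hlen : q.length ≤ n := by
          simp [SimpleGraph.Walk.length_cons] at hp
          omega
        exact ((h1 u z h hu hz).reachable).trans (ih z w hz hw q hlen)

lemma reachable_mono {H H' : SimpleGraph A}
    (h3 : ∀ x y, H'.Adj x y → H.Reachable x y) {x y : A} (h : H'.Reachable x y) :
    H.Reachable x y := by
  obtain ⟨p⟩ := h
  induction p with
  | nil => exact SimpleGraph.Reachable.refl _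
  | cons ha _ ih => exact (h3 _ _ ha).trans ih

lemma supp_suppress_adj (M : Multigraph A) (v : A) :
    ∀ x y, (M.suppress v).supp.Adj x y ↔
      (x ≠ y ∧ ¬(x = v ∨ y = v) ∧
        (M.mult s(x, y) ≠ 0 ∨
          (x ≠ y ∧ M.mult s(v, x) ≠ 0 ∧ M.mult s(v, y) ≠ 0))) := by
  intro x y
  constructor
  · rintro ⟨hxy, hm⟩
    rw [suppress_mult] at hm
    by_cases hv : x = v ∨ y = v
    · rw [if_pos hv] at hm; exact absurd rfl hm
    · rw [if_neg hv, if_neg hxy] at hm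
      refine ⟨hxy, hv, ?_⟩
      rcases Nat.eq_zero_or_pos (M.mult s(x, y)) with h | h
      · right
        refine ⟨hxy, ?_, ?_⟩ <;>
        · intro h0
          rw [h, h0] at hm
          simp at hm
      · left; omega
  · rintro ⟨hxy, hv, hcase⟩
    refine ⟨hxy, ?_⟩
    rw [suppress_mult, if_neg hv, if_neg hxy]
    rcases hcase with h | ⟨_, ha, hb⟩
    · omega
    · have h1 : min (M.mult s(v, x)) 1 = 1 := by omega
      have h2 : min (M.mult s(v, y)) 1 = 1 := by omega
      rw [h1, h2]
      omega

lemma cc_suppress_le (M : Multigraph A) (v : A) : cc (M.suppress v) ≤ cc M := by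
  classical
  set H : SimpleGraph A := M.supp with hH
  set H' : SimpleGraph A := (M.suppress v).supp with hH'
  have h1 : ∀ x y, H.Adj x y → x ≠ v → y ≠ v → H'.Adj x y := by
    intro x y ⟨hxy, hm⟩ hx hy
    rw [hH', supp_suppress_adj]
    exact ⟨hxy, by tauto, Or.inl hm⟩
  have h2 : ∀ x y, H.Adj v x → H.Adj v y → x ≠ y → H'.Adj x y := by
    intro x y ⟨hvx, hmx⟩ ⟨hvy, hmy⟩ hxy
    rw [hH', supp_suppress_adj]
    refine ⟨hxy, ?_, Or.inr ⟨hxy, hmx, hmy⟩⟩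
    push_neg
    exact ⟨Ne.symm hvx, Ne.symm hvy⟩
  have h3 : ∀ x y, H'.Adj x y → H.Reachable x y := by
    intro x y hadj
    rw [hH', supp_suppress_adj] at hadj
    obtain ⟨hxy, hv, hcase⟩ := hadj
    push_neg at hv
    rcases hcase with h | ⟨_, ha, hb⟩
    · exact SimpleGraph.Adj.reachable ⟨hxy, h⟩
    · have hax : H.Adj x v := by
        refine ⟨hv.1, ?_⟩
        rw [Sym2.eq_swap]
        exact ha
      have hvy : H.Adj v y := ⟨Ne.symm hv.2, hb⟩
      exact hax.reachable.trans hvy.reachable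
  -- the component map
  let F : H'.ConnectedComponent → H.ConnectedComponent :=
    SimpleGraph.ConnectedComponent.lift (fun x => H.connectedComponentMk x)
      (fun x y p _ => SimpleGraph.ConnectedComponent.sound (reachable_mono h3 ⟨p⟩))
  have hinj : Set.InjOn F ((H'.connectedComponentMk) '' (M.suppress v).verts) := by
    rintro a ⟨x, hx, rfl⟩ b ⟨y, hy, rfl⟩ hab
    simp only [F, SimpleGraph.ConnectedComponent.lift_mk] at hab
    have hreach : H.Reachable x y := SimpleGraph.ConnectedComponent.eq.mp hab
    obtain ⟨p⟩ := hreach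
    have hx' : x ≠ v := by
      intro h; exact (hx.2 : x ∉ ({v} : Set A)) (by simp [h])
    have hy' : y ≠ v := by
      intro h; exact (hy.2 : y ∉ ({v} : Set A)) (by simp [h])
    exact SimpleGraph.ConnectedComponent.sound
      (reach_transfer h1 h2 p.length x y hx' hy' p le_rfl)
  have himg : F '' ((H'.connectedComponentMk) '' (M.suppress v).verts)
      ⊆ (H.connectedComponentMk) '' M.verts := by
    rintro c ⟨a, ⟨x, hx, rfl⟩, rfl⟩
    exact ⟨x, hx.1, by simp [F, SimpleGraph.ConnectedComponent.lift_mk]⟩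
  calc cc (M.suppress v)
      = ((H'.connectedComponentMk) '' (M.suppress v).verts).ncard := rfl
    _ = (F '' ((H'.connectedComponentMk) '' (M.suppress v).verts)).ncard :=
        (Set.ncard_image_of_injOn hinj).symm
    _ ≤ ((H.connectedComponentMk) '' M.verts).ncard :=
        Set.ncard_le_ncard himg (Set.toFinite _)

end Multigraph
namespace Multigraph

variable {A : Type} [Fintype A]

lemma supp_suppress_eq_of_deg_zero (M : Multigraph A) (v : A) (h0 : M.deg v = 0) :
    (M.suppress v).supp = M.supp := by
  classical
  have hz : ∀ y, M.mult s(v, y) = 0 := mult_v_zero_of_deg_zero M v h0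
  have hmult : ∀ x y, (M.suppress v).mult s(x, y) = M.mult s(x, y) := by
    intro x y
    rw [suppress_mult]
    by_cases hv : x = v ∨ y = v
    · rw [if_pos hv]
      rcases hv with rfl | rfl
      · exact (hz y).symm
      · rw [Sym2.eq_swap]; exact (hz x).symm
    · rw [if_neg hv]
      push_neg at hv
      have hzx : M.mult s(v, x) = 0 := hz x
      have hzy : M.mult s(v, y) = 0 := hz y
      split_ifs with h1 h2
      · omega
      · simp
      · simp [hzx, hzy]
  ext x y
  show x ≠ y ∧ (M.suppress v).mult s(x, y) ≠ 0 ↔ x ≠ y ∧ M.mult s(x, y) ≠ 0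
  rw [hmult]

lemma eq_of_connectedComponentMk_eq_isolated {H : SimpleGraph A} {v u : A}
    (hv : ∀ y, ¬H.Adj v y)
    (h : H.connectedComponentMk u = H.connectedComponentMk v) : u = v := by
  have hr : H.Reachable v u := (SimpleGraph.ConnectedComponent.eq.mp h).symm
  obtain ⟨p⟩ := hr
  cases p with
  | nil => rfl
  | cons ha _ => exact absurd ha (hv _)

lemma cc_suppress_deg_zero (M : Multigraph A) (v : A) (hv : v ∈ M.verts)
    (h0 : M.deg v = 0) : cc (M.suppress v) + 1 = cc M := by
  classical
  have hz : ∀ y, M.mult s(v, y) = 0 := mult_v_zero_of_deg_zero M v h0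
  have hiso : ∀ y, ¬M.supp.Adj v y := by
    rintro y ⟨_, hm⟩
    exact hm (hz y)
  have hsupp : (M.suppress v).supp = M.supp := supp_suppress_eq_of_deg_zero M v h0
  have hverts : M.verts = insert v (M.verts \ {v}) := by
    rw [Set.insert_diff_singleton, Set.insert_eq_self.mpr hv]
  have himg : (M.supp.connectedComponentMk) '' M.verts
      = insert (M.supp.connectedComponentMk v)
        ((M.supp.connectedComponentMk) '' (M.verts \ {v})) := by
    conv_lhs => rw [hverts]
    rw [Set.image_insert_eq]
  have hnot : M.supp.connectedComponentMk v
      ∉ (M.supp.connectedComponentMk) '' (M.verts \ {v}) := by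
    rintro ⟨u, hu, hequ⟩
    have : u = v := eq_of_connectedComponentMk_eq_isolated hiso hequ
    exact (hu.2 : u ∉ ({v} : Set A)) (by simp [this])
  have : cc M = ((M.supp.connectedComponentMk) '' (M.verts \ {v})).ncard + 1 := by
    unfold cc
    rw [himg, Set.ncard_insert_of_notMem hnot (Set.toFinite _)]
  rw [this]
  congr 1
  unfold cc
  rw [hsupp]
  rfl

lemma ncard_verts_suppress (M : Multigraph A) (v : A) (hv : v ∈ M.verts) :
    (M.suppress v).verts.ncard + 1 = M.verts.ncard := by
  show (M.verts \ {v}).ncard + 1 = M.verts.ncard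
  rw [Set.ncard_diff_singleton_of_mem hv]
  have : 1 ≤ M.verts.ncard := by
    rw [Nat.one_le_iff_ne_zero, Ne, Set.ncard_eq_zero (Set.toFinite _)]
    intro h
    rw [h] at hv
    exact hv
  omega

lemma phi_suppress_le (M : Multigraph A) (v : A) (hv : v ∈ M.verts)
    (hdeg : M.deg v ≤ 2) : phi (M.suppress v) ≤ phi M := by
  have hn := ncard_verts_suppress M v hv
  rcases Nat.eq_zero_or_pos (M.deg v) with h0 | hpos
  · have hd := dsum_suppress_eq M v h0
    have hc := cc_suppress_deg_zero M v hv h0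
    unfold phi
    omega
  · have hd := dsum_suppress_le M v hpos hdeg
    have hc := cc_suppress_le M v
    unfold phi
    omega

lemma phi_step {M M' : Multigraph A} (h : SuppressStep M M') : phi M' ≤ phi M := by
  obtain ⟨v, hv, hdeg, rfl⟩ := h
  exact phi_suppress_le M v hv hdeg

lemma phi_rtg {M M' : Multigraph A} (h : Relation.ReflTransGen SuppressStep M M') :
    phi M' ≤ phi M := by
  induction h with
  | refl => exact le_refl _
  | tail hstep _ ih => exact le_trans (phi_step ‹_›) ih

lemma ncard_le_phi_of_reduced (M : Multigraph A) (h : M.Reduced) :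
    (M.verts.ncard : ℤ) ≤ phi M := by
  classical
  have h1 : M.verts.toFinset.card • 3 ≤ ∑ x ∈ M.verts.toFinset, M.deg x :=
    Finset.card_nsmul_le_sum _ _ _ (fun x hx => h x (by simpa using hx))
  simp only [smul_eq_mul] at h1
  have h2 : ∑ x ∈ M.verts.toFinset, M.deg x ≤ dsum M :=
    Finset.sum_le_sum_of_subset (Finset.subset_univ _)
  have h3 : M.verts.ncard = M.verts.toFinset.card := Set.ncard_eq_toFinset_card' _
  unfold phi
  omega

lemma exists_reduced : ∀ (n : ℕ) (M : Multigraph A), M.verts.ncard ≤ n →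
    ∃ M', Relation.ReflTransGen SuppressStep M M' ∧ M'.Reduced := by
  intro n
  induction n with
  | zero =>
    intro M hM
    refine ⟨M, Relation.ReflTransGen.refl, ?_⟩
    intro x hx
    have : M.verts = ∅ := by
      rw [← Set.ncard_eq_zero (Set.toFinite _)]
      omega
    rw [this] at hx
    exact absurd hx (Set.notMem_empty x)
  | succ n ih =>
    intro M hM
    by_cases hr : M.Reduced
    · exact ⟨M, Relation.ReflTransGen.refl, hr⟩
    · unfold Multigraph.Reduced at hr
      push_neg at hr
      obtain ⟨v, hv, hd⟩ := hr
      have hn := ncard_verts_suppress M v hv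
      obtain ⟨M', hpath, hred⟩ := ih (M.suppress v) (by omega)
      exact ⟨M', Relation.ReflTransGen.head ⟨v, hv, by omega, rfl⟩ hpath, hred⟩

lemma reducedSize_le_phi (M : Multigraph A) : (M.reducedSize : ℤ) ≤ phi M := by
  obtain ⟨M', hpath, hred⟩ := exists_reduced M.verts.ncard M le_rfl
  have h1 : M.reducedSize ≤ M'.verts.ncard := Nat.sInf_le ⟨M', hpath, hred, rfl⟩
  have h2 := ncard_le_phi_of_reduced M' hred
  have h3 := phi_rtg hpath
  have : (M.reducedSize : ℤ) ≤ (M'.verts.ncard : ℤ) := by exact_mod_cast h1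
  omega

end Multigraph
section GraphAux

variable {V : Type} [Fintype V]

lemma isAcyclic_anti {H G : SimpleGraph V} (hle : H ≤ G) (hG : G.IsAcyclic) :
    H.IsAcyclic := fun _v c hc => hG (c.mapLe hle) (hc.mapLe hle)

lemma card_cc_le (H : SimpleGraph V) :
    Fintype.card H.ConnectedComponent ≤ Fintype.card V :=
  Fintype.card_le_of_surjective H.connectedComponentMk (fun C => Quot.exists_rep C)

lemma card_cc_anti {H G : SimpleGraph V} (hle : H ≤ G) :
    Fintype.card G.ConnectedComponent ≤ Fintype.card H.ConnectedComponent := by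
  apply Fintype.card_le_of_surjective
    (SimpleGraph.ConnectedComponent.map (SimpleGraph.Hom.ofLE hle))
  intro C
  obtain ⟨v, rfl⟩ := Quot.exists_rep C
  exact ⟨H.connectedComponentMk v, rfl⟩

lemma acyclic_ncard_bound : ∀ (n : ℕ) (H : SimpleGraph V), H.edgeSet.ncard ≤ n →
    H.IsAcyclic →
    H.edgeSet.ncard + Fintype.card H.ConnectedComponent ≤ Fintype.card V := by
  intro n
  induction n with
  | zero =>
    intro H hn _
    have : H.edgeSet.ncard = 0 := by omega
    rw [this, zero_add]
    exact card_cc_le H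
  | succ n ih =>
    intro H hn hac
    by_cases h0 : H.edgeSet.ncard = 0
    · rw [h0, zero_add]; exact card_cc_le H
    · obtain ⟨e, he⟩ := Set.nonempty_of_ncard_ne_zero h0
      revert he
      refine Sym2.ind (fun a b he => ?_) e
      have hadj : H.Adj a b := (SimpleGraph.mem_edgeSet H).mp he
      set H' := H.deleteEdges {s(a, b)} with hH'
      have hedge : H'.edgeSet = H.edgeSet \ {s(a, b)} :=
        SimpleGraph.edgeSet_deleteEdges _
      have hcard : H'.edgeSet.ncard = H.edgeSet.ncard - 1 := by
        rw [hedge, Set.ncard_diff_singleton_of_mem he]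
      have hpos : 1 ≤ H.edgeSet.ncard := by omega
      have hle : H' ≤ H := SimpleGraph.deleteEdges_le _
      have hac' : H'.IsAcyclic := isAcyclic_anti hle hac
      -- the deleted edge is a bridge
      have hbridge := (SimpleGraph.isAcyclic_iff_forall_adj_isBridge.mp hac) hadj
      have hnr : ¬H'.Reachable a b := by
        rw [SimpleGraph.isBridge_iff] at hbridge
        exact hbridge
      -- component count increases
      have hsurj : Function.Surjective
          (SimpleGraph.ConnectedComponent.map (SimpleGraph.Hom.ofLE hle)) := by
        intro C
        obtain ⟨v, rfl⟩ := Quot.exists_rep C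
        exact ⟨H'.connectedComponentMk v, rfl⟩
      have hninj : ¬Function.Injective
          (SimpleGraph.ConnectedComponent.map (SimpleGraph.Hom.ofLE hle)) := by
        intro hinj
        apply hnr
        apply SimpleGraph.ConnectedComponent.eq.mp
        apply hinj
        show H.connectedComponentMk _ = H.connectedComponentMk _
        exact SimpleGraph.ConnectedComponent.sound hadj.reachable
      have hlt : Fintype.card H.ConnectedComponent
          < Fintype.card H'.ConnectedComponent :=
        Fintype.card_lt_of_surjective_not_injective _ hsurj hninj
      have := ih H' (by omega) hac'
      simp only [Fintype.card_eq_nat_card] at hlt this ⊢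
      omega

lemma ncard_edge_add_card_cc_le (G : SimpleGraph V) :
    G.edgeSet.ncard + Fintype.card G.ConnectedComponent ≤ Fintype.card V + fes G := by
  classical
  have hne : {k | ∃ F : Set (Sym2 V), F ⊆ G.edgeSet ∧ F.ncard = k ∧
      (G.deleteEdges F).IsAcyclic}.Nonempty := by
    refine ⟨G.edgeSet.ncard, G.edgeSet, subset_rfl, rfl, ?_⟩
    have : G.deleteEdges G.edgeSet = ⊥ := by
      show G \ SimpleGraph.fromEdgeSet G.edgeSet = ⊥
      rw [SimpleGraph.fromEdgeSet_edgeSet, sdiff_self]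
    rw [this]
    exact SimpleGraph.isAcyclic_bot
  obtain ⟨F, hFsub, hFcard, hFac⟩ := Nat.sInf_mem hne
  set H := G.deleteEdges F with hH
  have hedge : H.edgeSet = G.edgeSet \ F := SimpleGraph.edgeSet_deleteEdges _
  have hFfin : F.Finite := Set.toFinite _
  have hcard : H.edgeSet.ncard = G.edgeSet.ncard - F.ncard := by
    rw [hedge, Set.ncard_diff hFsub (Set.toFinite _)]
  have hFle : F.ncard ≤ G.edgeSet.ncard := Set.ncard_le_ncard hFsub (Set.toFinite _)
  have hcc := card_cc_anti (SimpleGraph.deleteEdges_le (G := G) F)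
  have hbound := acyclic_ncard_bound H.edgeSet.ncard H le_rfl hFac
  have : fes G = F.ncard := hFcard.symm
  simp only [Fintype.card_eq_nat_card, ← hH] at hcc hbound ⊢
  omega

end GraphAux
section MainAux

variable {V : Type} [Fintype V] [DecidableEq V]

/-- The trivial one-node tree-cut decomposition. -/
def trivialDecomp (V : Type) : TreeCutDecomp PUnit V where
  T := ⊥
  connected := SimpleGraph.Connected.mk (fun u v => by rw [Subsingleton.elim u v])
  acyclic := SimpleGraph.isAcyclic_bot
  root := PUnit.unit
  bag := fun _ => Set.univ
  bag_disjoint := fun s t hst => absurd (Subsingleton.elim s t) hst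
  bag_cover := fun _v => ⟨PUnit.unit, trivial⟩

lemma trivial_Yset (G : SimpleGraph V) :
    (trivialDecomp V).Yset PUnit.unit = Set.univ := by
  ext v
  simp only [Set.mem_univ, iff_true]
  refine ⟨PUnit.unit, ?_, trivial⟩
  intro p
  exact p.start_mem_support

lemma trivial_adh (G : SimpleGraph V) : (trivialDecomp V).adh G PUnit.unit = 0 := by
  unfold TreeCutDecomp.adh
  have hset : {e : Sym2 V | e ∈ G.edgeSet ∧ ∃ x y : V, e = s(x, y) ∧
      x ∈ (trivialDecomp V).Yset PUnit.unit ∧ y ∉ (trivialDecomp V).Yset PUnit.unit}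
      = ∅ := by
    ext e
    simp only [Set.mem_setOf_eq, Set.mem_empty_iff_false, iff_false]
    rintro ⟨_, x, y, _, _, hy⟩
    apply hy
    rw [trivial_Yset G]
    trivial
  rw [hset, Set.ncard_empty]

lemma trivial_proj : (trivialDecomp V).proj PUnit.unit = Sum.inl := by
  funext v
  unfold TreeCutDecomp.proj
  exact if_pos (Set.mem_univ v)

lemma trivial_torso_verts (G : SimpleGraph V) :
    ((trivialDecomp V).torso G PUnit.unit).verts = Set.range (Sum.inl : V → V ⊕ PUnit) := by
  show (Sum.inl '' Set.univ) ∪ (Sum.inr '' ((⊥ : SimpleGraph PUnit).neighborSet PUnit.unit))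
      = Set.range Sum.inl
  rw [Set.image_univ]
  have : ((⊥ : SimpleGraph PUnit).neighborSet PUnit.unit) = ∅ := by
    ext u; simp [SimpleGraph.neighborSet]
  rw [this, Set.image_empty, Set.union_empty]

lemma trivial_torso_mult_inl (G : SimpleGraph V) (a b : V) :
    ((trivialDecomp V).torso G PUnit.unit).mult s(Sum.inl a, Sum.inl b)
      = if G.Adj a b then 1 else 0 := by
  show Set.ncard {f : Sym2 V | f ∈ G.edgeSet ∧
      Sym2.map ((trivialDecomp V).proj PUnit.unit) f = s(Sum.inl a, Sum.inl b) ∧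
      ¬ (Sym2.map ((trivialDecomp V).proj PUnit.unit) f).IsDiag}
      = if G.Adj a b then 1 else 0
  rw [trivial_proj]
  have hset : {f : Sym2 V | f ∈ G.edgeSet ∧
      Sym2.map (Sum.inl : V → V ⊕ PUnit) f = s(Sum.inl a, Sum.inl b) ∧
      ¬ (Sym2.map (Sum.inl : V → V ⊕ PUnit) f).IsDiag}
      = if G.Adj a b then {s(a, b)} else (∅ : Set (Sym2 V)) := by
    ext f
    refine Sym2.ind (fun p q => ?_) f
    simp only [Set.mem_setOf_eq, Sym2.map_pair_eq]
    constructor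
    · rintro ⟨hedge, heq, _⟩
      have hpq : s(p, q) = s(a, b) := by
        rw [Sym2.eq_iff] at heq ⊢
        rcases heq with ⟨h1, h2⟩ | ⟨h1, h2⟩
        · exact Or.inl ⟨Sum.inl_injective h1, Sum.inl_injective h2⟩
        · exact Or.inr ⟨Sum.inl_injective h1, Sum.inl_injective h2⟩
      have hadj : G.Adj a b := by
        rw [← SimpleGraph.mem_edgeSet, ← hpq]
        exact hedge
      rw [if_pos hadj]
      exact hpq
    · intro hf
      by_cases hadj : G.Adj a b
      · rw [if_pos hadj] at hf
        have hpq : s(p, q) = s(a, b) := hf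
        have hedge : s(p, q) ∈ G.edgeSet := by rw [hpq]; exact hadj
        refine ⟨hedge, ?_, ?_⟩
        · rw [Sym2.eq_iff] at hpq ⊢
          rcases hpq with ⟨h1, h2⟩ | ⟨h1, h2⟩
          · exact Or.inl ⟨congrArg _ h1, congrArg _ h2⟩
          · exact Or.inr ⟨congrArg _ h1, congrArg _ h2⟩
        · rw [Sym2.isDiag_iff_proj_eq]
          intro hc
          have : p = q := Sum.inl_injective hc
          have : G.Adj p q := (SimpleGraph.mem_edgeSet G).mp (by rw [hpq]; exact hadj)
          exact this.ne ‹p = q›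
      · rw [if_neg hadj] at hf
        exact absurd hf (Set.notMem_empty _)
  rw [hset]
  by_cases hadj : G.Adj a b
  · rw [if_pos hadj, if_pos hadj, Set.ncard_singleton]
  · rw [if_neg hadj, if_neg hadj, Set.ncard_empty]

lemma trivial_torso_mult_inr (G : SimpleGraph V) (x : V ⊕ PUnit) (u : PUnit) :
    ((trivialDecomp V).torso G PUnit.unit).mult s(x, Sum.inr u) = 0 := by
  show Set.ncard {f : Sym2 V | f ∈ G.edgeSet ∧
      Sym2.map ((trivialDecomp V).proj PUnit.unit) f = s(x, Sum.inr u) ∧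
      ¬ (Sym2.map ((trivialDecomp V).proj PUnit.unit) f).IsDiag} = 0
  rw [trivial_proj]
  rw [Set.ncard_eq_zero (Set.toFinite _)]
  ext f
  refine Sym2.ind (fun p q => ?_) f
  simp only [Set.mem_setOf_eq, Set.mem_empty_iff_false, iff_false]
  rintro ⟨_, heq, _⟩
  rw [Sym2.map_pair_eq, Sym2.eq_iff] at heq
  rcases heq with ⟨_, h⟩ | ⟨h, _⟩ <;> exact Sum.inl_ne_inr h

end MainAux
section MainAux2

variable {V : Type} [Fintype V] [DecidableEq V]

lemma trivial_torso_deg_inl (G : SimpleGraph V) (a : V) :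
    ((trivialDecomp V).torso G PUnit.unit).deg (Sum.inl a) = G.degree a := by
  classical
  unfold Multigraph.deg
  rw [Fintype.sum_sum_type]
  have h1 : ∀ b : V, ((trivialDecomp V).torso G PUnit.unit).mult s(Sum.inl a, Sum.inl b)
      = if G.Adj a b then 1 else 0 := fun b => trivial_torso_mult_inl G a b
  have h2 : ∀ u : PUnit, ((trivialDecomp V).torso G PUnit.unit).mult s(Sum.inl a, Sum.inr u)
      = 0 := fun u => trivial_torso_mult_inr G _ u
  rw [Finset.sum_congr rfl (fun b _ => h1 b), Finset.sum_congr rfl (fun u _ => h2 u)]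
  have h3 : ((trivialDecomp V).torso G PUnit.unit).mult s(Sum.inl a, Sum.inl a) = 0 := by
    rw [h1 a, if_neg (G.irrefl)]
  rw [h3]
  have h4 : G.degree a = (Finset.univ.filter (fun b => G.Adj a b)).card := by
    unfold SimpleGraph.degree
    congr 1
    ext b
    simp [SimpleGraph.mem_neighborFinset]
  rw [h4, Finset.card_filter]
  simp

lemma trivial_torso_deg_inr (G : SimpleGraph V) (u : PUnit) :
    ((trivialDecomp V).torso G PUnit.unit).deg (Sum.inr u) = 0 := by
  classical
  unfold Multigraph.deg
  have h2 : ∀ y : V ⊕ PUnit, ((trivialDecomp V).torso G PUnit.unit).mult s(Sum.inr u, y)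
      = 0 := by
    intro y
    have : s(Sum.inr u, y) = s(y, Sum.inr u) := Sym2.eq_swap
    rw [this]
    exact trivial_torso_mult_inr G y u
  rw [Finset.sum_congr rfl (fun y _ => h2 y), h2]
  simp

lemma trivial_torso_dsum (G : SimpleGraph V) :
    Multigraph.dsum ((trivialDecomp V).torso G PUnit.unit) = 2 * G.edgeSet.ncard := by
  classical
  unfold Multigraph.dsum
  rw [Fintype.sum_sum_type]
  rw [Finset.sum_congr rfl (fun a _ => trivial_torso_deg_inl G a),
    Finset.sum_congr rfl (fun u _ => trivial_torso_deg_inr G u)]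
  rw [Finset.sum_const, G.sum_degrees_eq_twice_card_edges, smul_zero, add_zero,
    Set.ncard_eq_toFinset_card' G.edgeSet]
  simp [SimpleGraph.edgeFinset]

lemma trivial_torso_verts_ncard (G : SimpleGraph V) :
    ((trivialDecomp V).torso G PUnit.unit).verts.ncard = Fintype.card V := by
  rw [trivial_torso_verts, ← Set.image_univ,
    Set.ncard_image_of_injective _ Sum.inl_injective, Set.ncard_univ,
    Nat.card_eq_fintype_card]

lemma trivial_torso_cc_le (G : SimpleGraph V) :
    Multigraph.cc ((trivialDecomp V).torso G PUnit.unit)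
      ≤ Fintype.card G.ConnectedComponent := by
  classical
  set M₀ := (trivialDecomp V).torso G PUnit.unit with hM
  have hadj_inl : ∀ a b : V, (M₀.supp.Adj (Sum.inl a) (Sum.inl b)) ↔ G.Adj a b := by
    intro a b
    constructor
    · rintro ⟨hne, hm⟩
      rw [hM, trivial_torso_mult_inl] at hm
      by_cases h : G.Adj a b
      · exact h
      · rw [if_neg h] at hm; exact absurd rfl hm
    · intro h
      refine ⟨fun hc => h.ne (Sum.inl_injective hc), ?_⟩
      rw [hM, trivial_torso_mult_inl, if_pos h]
      omega
  have hadj_inr : ∀ (x : V ⊕ PUnit) (u : PUnit), ¬ M₀.supp.Adj x (Sum.inr u) := by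
    rintro x u ⟨_, hm⟩
    rw [hM, trivial_torso_mult_inr] at hm
    exact hm rfl
  cases isEmpty_or_nonempty V with
  | inl hV =>
    have hverts : M₀.verts = ∅ := by
      rw [hM, trivial_torso_verts]
      ext x
      rcases x with a | u
      · exact iff_of_false (fun ⟨a', h⟩ => IsEmpty.false a') (Set.notMem_empty _)
      · constructor
        · rintro ⟨a', h⟩
          exact Sum.inl_ne_inr h
        · exact fun h => absurd h (Set.notMem_empty _)
    unfold Multigraph.cc
    rw [hverts, Set.image_empty, Set.ncard_empty]
    exact Nat.zero_le _
  | inr hV =>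
    obtain ⟨v₀⟩ := hV
    set fV : V ⊕ PUnit → G.ConnectedComponent :=
      fun x => match x with
        | Sum.inl a => G.connectedComponentMk a
        | Sum.inr _ => G.connectedComponentMk v₀ with hfV
    have hstep : ∀ x y, M₀.supp.Adj x y → fV x = fV y := by
      intro x y hxy
      rcases x with a | u
      · rcases y with b | u
        · exact SimpleGraph.ConnectedComponent.sound ((hadj_inl a b).mp hxy).reachable
        · exact absurd hxy (hadj_inr _ _)
      · rcases y with b | u'
        · exact absurd hxy.symm (hadj_inr _ _)
        · rfl
    have hwalk : ∀ x y (p : M₀.supp.Walk x y), fV x = fV y := by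
      intro x y p
      induction p with
      | nil => rfl
      | cons h _ ih => exact (hstep _ _ h).trans ih
    set Φ : M₀.supp.ConnectedComponent → G.ConnectedComponent :=
      SimpleGraph.ConnectedComponent.lift fV (fun x y p _ => hwalk x y p) with hΦ
    have hinj : Set.InjOn Φ ((M₀.supp.connectedComponentMk) '' M₀.verts) := by
      rintro c1 ⟨x, hx, rfl⟩ c2 ⟨y, hy, rfl⟩ hc
      rw [hM, trivial_torso_verts] at hx hy
      obtain ⟨a, rfl⟩ := hx
      obtain ⟨b, rfl⟩ := hy
      simp only [hΦ, SimpleGraph.ConnectedComponent.lift_mk] at hc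
      have hreach : G.Reachable a b := SimpleGraph.ConnectedComponent.eq.mp hc
      obtain ⟨p⟩ := hreach
      apply SimpleGraph.ConnectedComponent.sound
      exact SimpleGraph.Walk.reachable
        (p.map (⟨Sum.inl, fun hab => (hadj_inl _ _).mpr hab⟩ : G →g M₀.supp))
    calc Multigraph.cc M₀
        = ((M₀.supp.connectedComponentMk) '' M₀.verts).ncard := rfl
      _ = (Φ '' ((M₀.supp.connectedComponentMk) '' M₀.verts)).ncard :=
          (Set.ncard_image_of_injOn hinj).symm
      _ ≤ (Set.univ : Set G.ConnectedComponent).ncard :=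
          Set.ncard_le_ncard (Set.subset_univ _) (Set.toFinite _)
      _ = Fintype.card G.ConnectedComponent := by
          rw [Set.ncard_univ, Nat.card_eq_fintype_card]

lemma trivial_torso_phi_le (G : SimpleGraph V) :
    Multigraph.phi ((trivialDecomp V).torso G PUnit.unit) ≤ 2 * (fes G : ℤ) := by
  unfold Multigraph.phi
  rw [trivial_torso_dsum G, trivial_torso_verts_ncard G]
  have hc := trivial_torso_cc_le G
  have hfb := ncard_edge_add_card_cc_le G
  simp only [← Nat.card_eq_fintype_card] at hc hfb ⊢
  omega

end MainAux2

/-- Every graph with feedback edge number `k` has tree-cut width at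
most `2k + 1`. -/
theorem tcw_le_two_fes_add_one {V : Type} [Fintype V] [DecidableEq V]
    (G : SimpleGraph V) (k : ℕ) (hk : fes G = k) :
    tcw G ≤ 2 * k + 1 := by
  subst hk
  have htor : (trivialDecomp V).tor G PUnit.unit ≤ 2 * fes G + 1 := by
    have h1 := Multigraph.reducedSize_le_phi ((trivialDecomp V).torso G PUnit.unit)
    have h2 := trivial_torso_phi_le G
    have h3 : ((((trivialDecomp V).torso G PUnit.unit).reducedSize : ℤ))
        ≤ 2 * (fes G : ℤ) := le_trans h1 h2
    unfold TreeCutDecomp.tor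
    omega
  have hwidth : (trivialDecomp V).width G ≤ 2 * fes G + 1 := by
    unfold TreeCutDecomp.width
    apply Finset.sup_le
    intro t _
    have ht : t = PUnit.unit := Subsingleton.elim _ _
    subst ht
    apply max_le
    · rw [trivial_adh G]
      exact Nat.zero_le _
    · exact htor
  calc tcw G ≤ (trivialDecomp V).width G :=
        Nat.sInf_le ⟨PUnit, inferInstance, trivialDecomp V, rfl⟩
    _ ≤ 2 * fes G + 1 := hwidth

end
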